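/- The intersection of two IP* subsets of ℕ is an IP* set. -/

import Mathlib

open Set

def Thick (A : Set ℕ) : Prop :=
  ∀ F : Finset ℕ, ∃ x : ℕ, ∀ f ∈ F, f + x ∈ A

def PiecewiseSyndetic (A : Set ℕ) : Prop :=
  ∃ F : Finset ℕ, Thick (⋃ t ∈ F, {y : ℕ | t + y ∈ A})

def Syndetic (A : Set ℕ) : Prop :=
  ∃ F : Finset ℕ, ∀ n : ℕ, ∃ t ∈ F, t + n ∈ A

def FS (x : ℕ → ℕ) : Set ℕ :=
  {n : ℕ | ∃ H : Finset ℕ, H.Nonempty ∧ n = ∑ t ∈ H, x t}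

def IPSet (A : Set ℕ) : Prop :=
  ∃ x : ℕ → ℕ, Function.Injective x ∧ FS x ⊆ A

def IPStar (A : Set ℕ) : Prop :=
  ∀ B : Set ℕ, IPSet B → (A ∩ B).Nonempty

/-- Every element of Hindman's `FS` of a stream is a finite sum. -/
lemma hindmanFS_subset_FS (b : ℕ → ℕ) : Hindman.FS b ⊆ FS b := by
  intro m hm
  induction hm with
  | head' a => exact ⟨{0}, Finset.singleton_nonempty 0, by simp [Stream'.head]; rfl⟩
  | tail' a m h ih =>
      obtain ⟨H, hne, hsum⟩ := ih
      refine ⟨H.image (· + 1), hne.image _, ?_⟩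
      show m = ∑ t ∈ H.image (· + 1), Stream'.get a t
      rw [Finset.sum_image (fun x _ y _ h => by simpa using h)]
      exact hsum
  | cons' a m h ih =>
      obtain ⟨H, hne, hsum⟩ := ih
      refine ⟨insert 0 (H.image (· + 1)), ⟨0, Finset.mem_insert_self _ _⟩, ?_⟩
      show a.head + m = ∑ t ∈ insert 0 (H.image (· + 1)), Stream'.get a t
      rw [Finset.sum_insert (by simp), Finset.sum_image (fun x _ y _ h => by simpa using h)]
      show Stream'.head a + m = a 0 + _
      rw [hsum]; rfl

lemma FS_pos {x : ℕ → ℕ} (hx : ∀ k, 0 < x k) {m : ℕ} (hm : m ∈ FS x) : 0 < m := by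
  obtain ⟨H, hne, rfl⟩ := hm
  exact Finset.sum_pos (fun i _ => hx i) hne

/-- An IP set is witnessed by an injective sequence of positive numbers. -/
lemma IPSet.exists_pos {C : Set ℕ} (h : IPSet C) :
    ∃ x : ℕ → ℕ, Function.Injective x ∧ (∀ k, 0 < x k) ∧ FS x ⊆ C := by
  obtain ⟨x, xinj, xsub⟩ := h
  by_cases h0 : ∀ i, 0 < x i
  · exact ⟨x, xinj, h0, xsub⟩
  · push_neg at h0
    obtain ⟨i0, hi0⟩ := h0
    have hi0' : x i0 = 0 := Nat.le_zero.mp hi0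
    set e : ℕ → ℕ := fun k => if k < i0 then k else k + 1 with he
    have einj : Function.Injective e := by
      intro a b hab; simp only [he] at hab; split_ifs at hab <;> omega
    have ene : ∀ k, e k ≠ i0 := by intro k; simp only [he]; split_ifs <;> omega
    refine ⟨x ∘ e, xinj.comp einj, ?_, ?_⟩
    · intro k
      rcases Nat.eq_zero_or_pos (x (e k)) with h | h
      · exact absurd (xinj (h.trans hi0'.symm)) (ene k)
      · exact h
    · intro m hm
      apply xsub
      obtain ⟨H, hne, rfl⟩ := hm
      exact ⟨H.image e, hne.image _, (Finset.sum_image (fun a _ b _ => fun h => einj h)).symm⟩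

/-- From a stream of positive numbers, extract a strictly monotone sequence whose
finite sums lie in the Hindman FS-set of the stream, by grouping into blocks. -/
lemma exists_strictMono_FS_subset (b : ℕ → ℕ) (hb : ∀ n, 0 < b n) :
    ∃ y : ℕ → ℕ, StrictMono y ∧ FS y ⊆ Hindman.FS b := by
  -- g k = (start of block k, length of block k)
  let g : ℕ → ℕ × ℕ := fun k => Nat.rec (0, 1)
    (fun _ p => (p.1 + p.2, (∑ i ∈ Finset.Ico p.1 (p.1 + p.2), b i) + 1)) k
  set n : ℕ → ℕ := fun k => (g k).1 with hn
  set y : ℕ → ℕ := fun k => ∑ i ∈ Finset.Ico (n k) (n (k + 1)), b i with hy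
  have hL : ∀ k, 0 < (g k).2 := by
    intro k; cases k with
    | zero => exact Nat.one_pos
    | succ k => exact Nat.succ_pos _
  have hnsucc : ∀ k, n (k + 1) = n k + (g k).2 := fun k => rfl
  have hnlt : ∀ k, n k < n (k + 1) := by
    intro k; rw [hnsucc]; exact Nat.lt_add_of_pos_right (hL k)
  have hnmono : StrictMono n := strictMono_nat_of_lt_succ hnlt
  have hyL : ∀ k, (g k).2 ≤ y k := by
    intro k
    calc (g k).2 = (Finset.Ico (n k) (n (k + 1))).card := by
          rw [Nat.card_Ico, hnsucc]; omega
      _ ≤ ∑ i ∈ Finset.Ico (n k) (n (k + 1)), b i :=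
          Finset.card_nsmul_le_sum _ _ 1 (fun i _ => hb i) |>.trans_eq' (by simp)
      _ = y k := rfl
  have hg2 : ∀ k, (g (k + 1)).2 = y k + 1 := fun k => rfl
  have hymono : StrictMono y := by
    apply strictMono_nat_of_lt_succ
    intro k
    have := hyL (k + 1)
    rw [hg2] at this
    omega
  refine ⟨y, hymono, ?_⟩
  intro m hm
  obtain ⟨H, hne, rfl⟩ := hm
  have hdisj : (↑H : Set ℕ).PairwiseDisjoint
      (fun k => Finset.Ico (n k) (n (k + 1))) := by
    intro a _ c _ hac
    have : n (a + 1) ≤ n c ∨ n (c + 1) ≤ n a := by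
      rcases lt_or_gt_of_ne hac with h | h
      · exact Or.inl (hnmono.monotone h)
      · exact Or.inr (hnmono.monotone h)
    apply Finset.disjoint_left.mpr
    intro i hi hi'
    simp only [Finset.mem_Ico] at hi hi'
    omega
  have : ∑ t ∈ H, y t = ∑ i ∈ H.biUnion (fun k => Finset.Ico (n k) (n (k + 1))), b i :=
    (Finset.sum_biUnion hdisj).symm
  rw [this]
  apply Hindman.FS.finset_sum
  obtain ⟨k, hk⟩ := hne
  exact ⟨n k, Finset.mem_biUnion.mpr ⟨k, hk, Finset.mem_Ico.mpr ⟨le_refl _, hnlt k⟩⟩⟩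

lemma IPStar.inter_IPSet {A C : Set ℕ} (hA : IPStar A) (hC : IPSet C) :
    IPSet (A ∩ C) := by
  obtain ⟨x, xinj, xpos, xsub⟩ := hC.exists_pos
  have cover : Hindman.FS x ⊆ ⋃₀ {A ∩ FS x, FS x \ A} := by
    intro m hm
    have hmx := hindmanFS_subset_FS x hm
    by_cases hmA : m ∈ A
    · exact ⟨A ∩ FS x, Or.inl rfl, hmA, hmx⟩
    · exact ⟨FS x \ A, Or.inr rfl, hmx, hmA⟩
  obtain ⟨c, hc, b, hb⟩ := Hindman.FS_partition_regular x _ (Set.toFinite _) cover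
  have hcsub : c ⊆ FS x := by
    rcases hc with rfl | rfl
    · exact inter_subset_right
    · exact diff_subset
  have bpos : ∀ k, 0 < b k := fun k =>
    FS_pos xpos (hcsub (hb (Hindman.FS.singleton b k)))
  obtain ⟨y, ymono, hy⟩ := exists_strictMono_FS_subset b bpos
  have hyc : FS y ⊆ c := fun m hm => hb (hy hm)
  rcases hc with rfl | rfl
  · exact ⟨y, ymono.injective, fun m hm => ⟨(hyc hm).1, xsub (hyc hm).2⟩⟩
  · exfalso
    obtain ⟨m, hmA, hmy⟩ := hA (FS y) ⟨y, ymono.injective, subset_rfl⟩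
    exact (hyc hmy).2 hmA

theorem ipstar_inter (A B : Set ℕ) (hA : IPStar A) (hB : IPStar B) :
    IPStar (A ∩ B) := by
  intro C hC
  obtain ⟨m, hmB, hmA, hmC⟩ := hB (A ∩ C) (hA.inter_IPSet hC)
  exact ⟨m, ⟨hmA, hmB⟩, hmC⟩
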